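/- Let u be a vertex with d_u+1 distinct local eigenvalues and let π(u) = {U_0,...,U_r} be a walk-regular partition around u. Then r = d_u if and only if every characteristic vector χ_i of U_i lies in the local vector space A(u) = span{A^ℓ e_u : 0 ≤ ℓ ≤ d_u}. -/

import Mathlib

open Module Submodule Matrix

/-- Krylov: the span of all powers applied to e equals the span of the first d+1,
provided the full span has finrank ≤ d+1. -/
lemma krylov {V : Type*} [Fintype V] [DecidableEq V] (A : Matrix V V ℝ) (e : V → ℝ) (d : ℕ)
    (h : finrank ℝ (span ℝ (Set.range fun ℓ : ℕ => (A ^ ℓ).mulVec e)) ≤ d + 1) :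
    span ℝ (Set.range fun ℓ : Fin (d + 1) => (A ^ (ℓ : ℕ)).mulVec e)
      = span ℝ (Set.range fun ℓ : ℕ => (A ^ ℓ).mulVec e) := by
  set f : ℕ → (V → ℝ) := fun ℓ => (A ^ ℓ).mulVec e with hf
  set S : ℕ → Submodule ℝ (V → ℝ) := fun m => span ℝ (f '' Set.Iio m) with hS
  have hfin : ∀ m, S m ≤ span ℝ (Set.range f) := fun m =>
    span_mono (by rintro x ⟨ℓ, _, rfl⟩; exact ⟨ℓ, rfl⟩)
  have hrange : (Set.range fun ℓ : Fin (d + 1) => f ℓ) = f '' Set.Iio (d + 1) := by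
    ext x
    constructor
    · rintro ⟨ℓ, rfl⟩; exact ⟨ℓ, ℓ.isLt, rfl⟩
    · rintro ⟨ℓ, hℓ, rfl⟩; exact ⟨⟨ℓ, hℓ⟩, rfl⟩
  rw [hrange]
  -- main claim: S (d+1) = full span
  have hsucc : ∀ k, f (k + 1) = A.mulVec (f k) := by
    intro k
    simp only [hf, pow_succ']
    rw [← Matrix.mulVec_mulVec]
  -- Lemma A
  have lemA : ∀ m, f m ∈ S m → ∀ k, f k ∈ S m := by
    intro m hm k
    have hmap : ∀ x ∈ S m, A.mulVec x ∈ S m := by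
      intro x hx
      have : Submodule.map A.mulVecLin (S m) ≤ S m := by
        rw [hS, Submodule.map_span]
        apply span_le.2
        rintro y ⟨z, ⟨ℓ, hℓ, rfl⟩, rfl⟩
        rw [Matrix.mulVecLin_apply, ← hsucc]
        rcases lt_or_eq_of_le (Nat.succ_le_of_lt hℓ) with h' | h'
        · exact subset_span ⟨ℓ + 1, h', rfl⟩
        · rw [show ℓ + 1 = m from h']; exact hm
      exact this ⟨x, hx, by rw [Matrix.mulVecLin_apply]⟩
    induction k with
    | zero =>
      rcases Nat.eq_zero_or_pos m with h0 | h0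
      · rw [← h0]; exact h0 ▸ hm
      · exact subset_span ⟨0, h0, rfl⟩
    | succ k ih => rw [hsucc]; exact hmap _ ih
  by_cases hc : ∃ m ≤ d, f m ∈ S m
  · obtain ⟨m, hmd, hm⟩ := hc
    have h1 : span ℝ (Set.range f) ≤ S m := by
      apply span_le.2
      rintro x ⟨k, rfl⟩
      exact lemA m hm k
    have h2 : S m ≤ S (d + 1) := span_mono (Set.image_mono (fun x hx => by
      simp only [Set.mem_Iio] at *; omega))
    exact le_antisymm (hfin _) (h1.trans h2)
  · push_neg at hc
    -- strict chain: finrank S m ≥ m for m ≤ d+1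
    have hmono : ∀ m ≤ d, S m < S (m + 1) := by
      intro m hm
      refine lt_of_le_of_ne (span_mono (Set.image_mono (fun x hx => by
        simp only [Set.mem_Iio] at *; omega))) ?_
      intro heq
      exact hc m hm (heq ▸ subset_span ⟨m, Nat.lt_succ_self m, rfl⟩)
    have hrank : ∀ m ≤ d + 1, m ≤ finrank ℝ (S m) := by
      intro m
      induction m with
      | zero => intro _; exact Nat.zero_le _
      | succ m ih =>
        intro hm
        have h1 := ih (by omega)
        have h2 : finrank ℝ (S m) < finrank ℝ (S (m + 1)) :=
          Submodule.finrank_lt_finrank_of_lt (hmono m (by omega))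
        omega
    refine Submodule.eq_of_le_of_finrank_le (hfin _) ?_
    calc finrank ℝ (span ℝ (Set.range f)) ≤ d + 1 := h
      _ ≤ finrank ℝ (S (d + 1)) := hrank _ le_rfl

/-- Let `u` have `d_u + 1` distinct local eigenvalues and let
`π(u) = {U_0,…,U_r}` be a walk-regular partition around `u`. Then `r = d_u` iff every
characteristic vector `χ_i` of a class `U_i` lies in the local vector space
`A(u) = span{A^ℓ e_u : 0 ≤ ℓ ≤ d_u}`. -/
theorem stmt4 {V : Type*} [Fintype V] [DecidableEq V] (G : SimpleGraph V)
    [DecidableRel G.Adj] (hconn : G.Connected) (u : V) (du r : ℕ)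
    (hdim : Module.finrank ℝ (Submodule.span ℝ
      (Set.range fun ℓ : ℕ => ((G.adjMatrix ℝ) ^ ℓ).mulVec (Pi.single u 1))) = du + 1)
    (U : Fin (r + 1) → Finset V)
    (hU0 : U 0 = {u})
    (hcover : ∀ v : V, ∃ i, v ∈ U i)
    (hdisj : ∀ i j, i ≠ j → ∀ v, v ∈ U i → v ∉ U j)
    (hnonempty : ∀ i, (U i).Nonempty)
    (hwr : ∀ i, ∀ v ∈ U i, ∀ w ∈ U i, ∀ ℓ : ℕ,
      ((G.adjMatrix ℝ) ^ ℓ) u v = ((G.adjMatrix ℝ) ^ ℓ) u w) :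
    r = du ↔
      ∀ i, (fun v => if v ∈ U i then (1 : ℝ) else 0) ∈
        Submodule.span ℝ (Set.range fun ℓ : Fin (du + 1) =>
          ((G.adjMatrix ℝ) ^ (ℓ : ℕ)).mulVec (Pi.single u 1)) := by
  classical
  set A : Matrix V V ℝ := G.adjMatrix ℝ with hA
  set f : ℕ → (V → ℝ) := fun ℓ => (A ^ ℓ).mulVec (Pi.single u 1) with hf
  set χ : Fin (r + 1) → (V → ℝ) := fun i v => if v ∈ U i then (1 : ℝ) else 0 with hχ
  set W : Submodule ℝ (V → ℝ) := span ℝ (Set.range χ) with hW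
  set Sinf : Submodule ℝ (V → ℝ) := span ℝ (Set.range f) with hSinf
  -- Krylov
  have hKry : span ℝ (Set.range fun ℓ : Fin (du + 1) => (A ^ (ℓ : ℕ)).mulVec (Pi.single u 1))
      = Sinf := krylov A (Pi.single u 1) du (le_of_eq hdim)
  -- symmetry of powers
  have hsym : ∀ (ℓ : ℕ) (v : V), (A ^ ℓ) v u = (A ^ ℓ) u v := by
    intro ℓ v
    have : (A ^ ℓ).transpose = A ^ ℓ := by
      rw [Matrix.transpose_pow, hA, SimpleGraph.transpose_adjMatrix]
    conv_lhs => rw [← this]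
    rfl
  -- f ℓ evaluated
  have hfval : ∀ (ℓ : ℕ) (v : V), f ℓ v = (A ^ ℓ) u v := by
    intro ℓ v
    simp only [hf, Matrix.mulVec_single_one, Matrix.col_apply, mul_one]
    exact hsym ℓ v
  -- linear independence of χ
  have hind : LinearIndependent ℝ χ := by
    rw [Fintype.linearIndependent_iff]
    intro g hg i
    obtain ⟨v, hv⟩ := hnonempty i
    have := congrFun hg v
    simp only [hχ, Finset.sum_apply, Pi.smul_apply, smul_eq_mul, Pi.zero_apply] at this
    rw [Finset.sum_eq_single i (fun j _ hj => by
        rw [if_neg (hdisj i j hj.symm v hv)]; ring) (by simp)] at this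
    simpa [hv] using this
  have hWrank : finrank ℝ W = r + 1 := by
    rw [hW, finrank_span_eq_card hind, Fintype.card_fin]
  -- each f ℓ lies in W
  have hfW : ∀ ℓ, f ℓ ∈ W := by
    intro ℓ
    have : f ℓ = ∑ i, ((A ^ ℓ) u ((hnonempty i).choose)) • χ i := by
      funext v
      obtain ⟨i0, hi0⟩ := hcover v
      rw [hfval]
      simp only [Finset.sum_apply, Pi.smul_apply, hχ, smul_eq_mul]
      rw [Finset.sum_eq_single i0 (fun j _ hj => by
          rw [if_neg (hdisj i0 j hj.symm v hi0)]; ring) (by simp)]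
      rw [if_pos hi0, mul_one]
      exact (hwr i0 ((hnonempty i0).choose) ((hnonempty i0).choose_spec) v hi0 ℓ).symm
    rw [this]
    exact Submodule.sum_mem _ (fun i _ => Submodule.smul_mem _ _ (subset_span ⟨i, rfl⟩))
  have hSW : Sinf ≤ W := span_le.2 (by rintro x ⟨ℓ, rfl⟩; exact hfW ℓ)
  constructor
  · intro hrd i
    have heq : Sinf = W := by
      apply Submodule.eq_of_le_of_finrank_le hSW
      rw [hWrank, hdim, hrd]
    rw [hKry, heq]
    exact subset_span ⟨i, rfl⟩
  · intro h
    have hWS : W ≤ Sinf := by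
      rw [← hKry]
      exact span_le.2 (by rintro x ⟨i, rfl⟩; exact h i)
    have heq : Sinf = W := le_antisymm hSW hWS
    have h2 : finrank ℝ Sinf = r + 1 := by rw [heq]; exact hWrank
    omega
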